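/- All eigenvalues of H⁽⁴⁾(a) are real if and only if |a| ≤ 1/2 - √69/18 (equivalently, a² ≤ (1/2 - √69/18)²), where H⁽⁴⁾(a) is the tridiagonal matrix with diagonal (2-27ia, 2-ia, 2+ia, 2+27ia) and off-diagonal -1. In particular the critical value α⁽⁴⁾ = 1/2 - √69/18 satisfies 0.0385 < α⁽⁴⁾ < 0.0386. -/

import Mathlib

open Matrix Complex

noncomputable def H4 (a : ℝ) : Matrix (Fin 4) (Fin 4) ℂ :=
  !![2 - 27 * a * Complex.I, -1, 0, 0;
     -1, 2 - a * Complex.I, -1, 0;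
     0, -1, 2 + a * Complex.I, -1;
     0, 0, -1, 2 + 27 * a * Complex.I]

lemma im_eq_zero_of_sq_eq {x : ℂ} {t : ℝ} (ht : 0 ≤ t) (h : x^2 = (t:ℂ)) : x.im = 0 := by
  have h1 := congrArg Complex.im h
  have h2 := congrArg Complex.re h
  simp [pow_two, Complex.mul_im, Complex.mul_re] at h1 h2
  by_contra him
  have hre : x.re = 0 := by
    rcases mul_eq_zero.mp (by linarith : x.re * x.im = 0) with h' | h'
    · exact h'
    · exact absurd h' him
  rw [hre] at h2
  nlinarith [sq_nonneg x.im, _root_.sq_abs x.im, abs_pos.mpr him, sq_nonneg |x.im|, pow_two x.im]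

lemma H4_spec_iff' (a : ℝ) (z : ℂ) :
    z ∈ spectrum ℂ (H4 a) ↔
      (2 - z)^4 + (730*(a:ℂ)^2 - 3)*(2 - z)^2 + (729*(a:ℂ)^4 - 675*(a:ℂ)^2 + 1) = 0 := by
  rw [spectrum.mem_iff, Matrix.isUnit_iff_isUnit_det, isUnit_iff_ne_zero, not_ne_iff]
  have hM : (algebraMap ℂ (Matrix (Fin 4) (Fin 4) ℂ) z - H4 a) =
      !![z - (2 - 27*(a:ℂ)*Complex.I), 1, 0, 0;
         1, z - (2 - (a:ℂ)*Complex.I), 1, 0;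
         0, 1, z - (2 + (a:ℂ)*Complex.I), 1;
         0, 0, 1, z - (2 + 27*(a:ℂ)*Complex.I)] := by
    ext i j
    fin_cases i <;> fin_cases j <;>
      simp [H4, Matrix.algebraMap_matrix_apply, Matrix.vecHead, Matrix.vecTail]
  rw [hM]
  simp [Matrix.det_succ_row_zero, Fin.sum_univ_succ, Matrix.det_fin_three,
    show (Fin.succAbove (1 : Fin 4) (2 : Fin 3)) = 3 from rfl]
  constructor <;> intro h
  · linear_combination h + (-729*(a:ℂ)^4*Complex.I^2 + 730*z^2*(a:ℂ)^2 - 2920*z*(a:ℂ)^2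
      + 2245*(a:ℂ)^2 + 729*(a:ℂ)^4) * Complex.I_sq
  · linear_combination h - (-729*(a:ℂ)^4*Complex.I^2 + 730*z^2*(a:ℂ)^2 - 2920*z*(a:ℂ)^2
      + 2245*(a:ℂ)^2 + 729*(a:ℂ)^4) * Complex.I_sq

set_option maxHeartbeats 2000000 in
theorem H4_real_spectrum_iff :
    (∀ a : ℝ,
      ((∀ z ∈ spectrum ℂ (H4 a), z.im = 0) ↔ |a| ≤ 1 / 2 - Real.sqrt 69 / 18)) ∧
    0.0385 < 1 / 2 - Real.sqrt 69 / 18 ∧ 1 / 2 - Real.sqrt 69 / 18 < 0.0386 := by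
  set s : ℝ := Real.sqrt 69 with hs
  have hs0 : 0 ≤ s := Real.sqrt_nonneg 69
  have hs2 : s^2 = 69 := Real.sq_sqrt (by norm_num)
  have hsl : 8.30 < s := by nlinarith
  have hsu : s < 8.31 := by nlinarith
  refine ⟨fun a => ?_, by nlinarith, by nlinarith⟩
  set u : ℝ := a^2 with hu
  have hu0 : 0 ≤ u := sq_nonneg a
  set c : ℝ := 730*u - 3 with hc
  set dd : ℝ := 729*u^2 - 675*u + 1 with hdd
  set D : ℝ := 529984*u^2 - 1680*u + 5 with hD
  have hDpos : 0 < D := by nlinarith [sq_nonneg (1059968*u - 1680)]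
  set r : ℝ := Real.sqrt D with hr
  have hr0 : 0 ≤ r := Real.sqrt_nonneg D
  have hr2 : r^2 = D := Real.sq_sqrt hDpos.le
  have hrpos : 0 < r := Real.sqrt_pos.mpr hDpos
  set tm : ℝ := (-c - r)/2 with htm
  set tp : ℝ := (-c + r)/2 with htp
  -- factorization of the characteristic polynomial
  have hfact : ∀ z : ℂ,
      (2 - z)^4 + (730*(a:ℂ)^2 - 3)*(2 - z)^2 + (729*(a:ℂ)^4 - 675*(a:ℂ)^2 + 1)
        = ((2 - z)^2 - (tp:ℝ)) * ((2 - z)^2 - (tm:ℝ)) := by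
    intro z
    have h1 : tp + tm = -c := by rw [htp, htm]; ring
    have h2 : tp * tm = dd := by rw [htp, htm]; nlinarith [hr2]
    have h1' : ((tp:ℂ)) + ((tm:ℂ)) = -((c:ℝ):ℂ) := by exact_mod_cast congrArg (fun x : ℝ => (x:ℂ)) h1
    have h2' : ((tp:ℂ)) * ((tm:ℂ)) = ((dd:ℝ):ℂ) := by exact_mod_cast congrArg (fun x : ℝ => (x:ℂ)) h2
    have hcC : ((c:ℝ):ℂ) = 730*(a:ℂ)^2 - 3 := by rw [hc, hu]; push_cast; ring
    have hddC : ((dd:ℝ):ℂ) = 729*(a:ℂ)^4 - 675*(a:ℂ)^2 + 1 := by rw [hdd, hu]; push_cast; ring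
    rw [← hcC, ← hddC, ← h2']
    linear_combination (2-z)^2 * h1'
  have halpha2 : (1/2 - s/18)^2 = (25 - 3*s)/54 := by linear_combination (1/324) * hs2
  have halpha0 : (0:ℝ) ≤ 1/2 - s/18 := by nlinarith
  constructor
  · intro hall
    by_contra hgt
    push_neg at hgt
    have hugt : (25 - 3*s)/54 < u := by
      nlinarith [_root_.sq_abs a, abs_nonneg a]
    have htmneg : tm < 0 := by
      rcases lt_or_ge c 0 with hcneg | hcpos
      · have hdd_neg : dd < 0 := by
          nlinarith [mul_pos (show (0:ℝ) < 54*u - 25 + 3*s by nlinarith)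
            (show (0:ℝ) < 25 + 3*s - 54*u by nlinarith)]
        have h1 : c^2 < r^2 := by nlinarith
        have h2 : -c < r := by nlinarith
        rw [htm]; linarith
      · rw [htm]; nlinarith [hrpos]
    set w : ℝ := Real.sqrt (-tm) with hw
    have hw0 : 0 < w := Real.sqrt_pos.mpr (by linarith)
    have hw2 : w^2 = -tm := Real.sq_sqrt (by linarith)
    have hx : ((2:ℂ) - ((2:ℂ) - Complex.I * (w:ℝ)))^2 = ((tm:ℝ):ℂ) := by
      rw [show ((2:ℂ) - ((2:ℂ) - Complex.I * (w:ℝ))) = Complex.I * (w:ℝ) by ring,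
        mul_pow, Complex.I_sq]
      rw [show ((tm:ℝ):ℂ) = -(((-tm:ℝ)):ℂ) by push_cast; ring, ← hw2]
      push_cast; ring
    have hzmem : ((2:ℂ) - Complex.I * (w:ℝ)) ∈ spectrum ℂ (H4 a) := by
      rw [H4_spec_iff', hfact, hx]
      ring
    have him := hall _ hzmem
    simp [Complex.sub_im, Complex.mul_im] at him
    nlinarith [hw0]
  · intro hle z hz
    have hule : u ≤ (25 - 3*s)/54 := by
      nlinarith [_root_.sq_abs a, abs_nonneg a]
    have hddnn : 0 ≤ dd := by
      nlinarith [mul_nonneg (show (0:ℝ) ≤ 25 - 3*s - 54*u by nlinarith)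
        (show (0:ℝ) ≤ 25 + 3*s - 54*u by nlinarith)]
    have hcneg : c < 0 := by nlinarith
    have hrle : r ≤ -c := by nlinarith
    have htm0 : 0 ≤ tm := by rw [htm]; linarith
    have htp0 : 0 ≤ tp := by rw [htp]; linarith
    rw [H4_spec_iff', hfact] at hz
    have himx : (2 - z).im = -z.im := by simp
    rcases mul_eq_zero.mp hz with h' | h'
    · have := im_eq_zero_of_sq_eq htp0 (sub_eq_zero.mp h')
      rw [himx] at this; linarith
    · have := im_eq_zero_of_sq_eq htm0 (sub_eq_zero.mp h')
      rw [himx] at this; linarith
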